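/- (Composite expectation identity for the doubly robust loss gradient) Under the covariate shift assumption (same conditional law of Y given Z in source and target) and with correctly specified density ratio h⋆(z) = exp(φ(z)ᵀᾱ), for any measurable m̃ and any β, E_S[h⋆(Z) X (m̃(Z) − Y)] − E_T[X (m̃(Z) − g(Xᵀβ))] = −E_T[X (Y − g(Xᵀβ))]; i.e., the arbitrary imputation function m̃ cancels exactly. -/
import Mathlib



open MeasureTheory

private lemma withDensity_integral_helper {α : Type*} [MeasurableSpace α]
    (ν : Measure α) (p : α → ℝ) (hp : Measurable p) (hp0 : ∀ z, 0 ≤ p z)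
    (ψ : α → ℝ) :
    ∫ z, ψ z ∂(ν.withDensity (fun z => ENNReal.ofReal (p z)))
      = ∫ z, p z * ψ z ∂ν := by
  have h1 : (fun z => ENNReal.ofReal (p z)) = (fun z => ((p z).toNNReal : ENNReal)) := by
    rfl
  rw [h1, integral_withDensity_eq_integral_smul (by measurability) ψ]
  congr 1
  ext z
  simp [NNReal.smul_def, Real.coe_toNNReal _ (hp0 z)]


/-- exact cancellation of the imputation function under a correct density
ratio: under covariate shift and with `h⋆(z) = exp(φ(z)ᵀᾱ) = p_T(z)/p_S(z)`, for any
measurable `m̃` and any `β`,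
`E_S[h⋆(Z) X (m̃(Z) − Y)] − E_T[X (m̃(Z) − g(Xᵀβ))] = −E_T[X (Y − g(Xᵀβ))]`. -/
theorem imputation_function_cancels {Ω α : Type*} [MeasurableSpace Ω] [MeasurableSpace α]
    (μS μT : Measure Ω) [IsProbabilityMeasure μS] [IsProbabilityMeasure μT]
    (ν : Measure α) (Z : Ω → α) (Y : Ω → ℝ) (q d : ℕ) (x : α → Fin q → ℝ)
    (φ : α → Fin d → ℝ) (αbar : Fin d → ℝ) (pS pT : α → ℝ) (g : ℝ → ℝ)
    (mstar mtil hstar : α → ℝ) (β : Fin q → ℝ)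
    (hZ : Measurable Z) (hY : Measurable Y) (hg : Measurable g)
    (hx : ∀ i, Measurable fun z => x z i) (hφ : ∀ i, Measurable fun z => φ z i)
    (hmt : Measurable mtil) (hmtbd : ∃ C : ℝ, ∀ z, |mtil z| ≤ C)
    (hms : Measurable mstar)
    (hpSme : Measurable pS) (hpTme : Measurable pT)
    (hpS : ∀ z, 0 ≤ pS z) (hpT : ∀ z, 0 ≤ pT z)
    -- correct specification of the density ratio:
    (hstar_def : ∀ z, hstar z = Real.exp (∑ i, φ z i * αbar i))
    (hratio : ∀ z, pT z = hstar z * pS z)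
    (hmapS : Measure.map Z μS = ν.withDensity (fun z => ENNReal.ofReal (pS z)))
    (hmapT : Measure.map Z μT = ν.withDensity (fun z => ENNReal.ofReal (pT z)))
    -- covariate shift: same conditional law of `Y` given `Z` (tower under both):
    (htowerS : ∀ ψ : α → ℝ, Integrable (fun ω => ψ (Z ω) * Y ω) μS →
      Integrable (fun ω => ψ (Z ω) * mstar (Z ω)) μS →
      ∫ ω, ψ (Z ω) * Y ω ∂μS = ∫ ω, ψ (Z ω) * mstar (Z ω) ∂μS)
    (htowerT : ∀ ψ : α → ℝ, Integrable (fun ω => ψ (Z ω) * Y ω) μT →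
      Integrable (fun ω => ψ (Z ω) * mstar (Z ω)) μT →
      ∫ ω, ψ (Z ω) * Y ω ∂μT = ∫ ω, ψ (Z ω) * mstar (Z ω) ∂μT)
    (hint1 : ∀ i, Integrable (fun ω => hstar (Z ω) * x (Z ω) i * (mtil (Z ω) - Y ω)) μS)
    (hint2 : ∀ i, Integrable (fun ω => hstar (Z ω) * x (Z ω) i * Y ω) μS)
    (hint3 : ∀ i, Integrable (fun ω => hstar (Z ω) * x (Z ω) i * mtil (Z ω)) μS)
    (hint4 : ∀ i, Integrable (fun ω => hstar (Z ω) * x (Z ω) i * mstar (Z ω)) μS)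
    (hint5 : ∀ i, Integrable (fun ω => x (Z ω) i * Y ω) μT)
    (hint6 : ∀ i, Integrable (fun ω => x (Z ω) i * mtil (Z ω)) μT)
    (hint7 : ∀ i, Integrable (fun ω => x (Z ω) i * mstar (Z ω)) μT)
    (hint8 : ∀ i, Integrable (fun ω => x (Z ω) i * g (∑ j, x (Z ω) j * β j)) μT) :
    ∀ i, ∫ ω, hstar (Z ω) * x (Z ω) i * (mtil (Z ω) - Y ω) ∂μS
        - ∫ ω, x (Z ω) i * (mtil (Z ω) - g (∑ j, x (Z ω) j * β j)) ∂μT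
      = -∫ ω, x (Z ω) i * (Y ω - g (∑ j, x (Z ω) j * β j)) ∂μT := by
  intro i
  -- change of variables lemma
  have keyS : ∀ ψ : α → ℝ, Measurable ψ →
      ∫ ω, ψ (Z ω) ∂μS = ∫ z, pS z * ψ z ∂ν := by
    intro ψ hψ
    rw [← integral_map hZ.aemeasurable hψ.aestronglyMeasurable, hmapS,
      withDensity_integral_helper ν pS hpSme hpS ψ]
  have keyT : ∀ ψ : α → ℝ, Measurable ψ →
      ∫ ω, ψ (Z ω) ∂μT = ∫ z, pT z * ψ z ∂ν := by
    intro ψ hψ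
    rw [← integral_map hZ.aemeasurable hψ.aestronglyMeasurable, hmapT,
      withDensity_integral_helper ν pT hpTme hpT ψ]
  have hhs : Measurable hstar := by
    have : Measurable fun z => Real.exp (∑ i, φ z i * αbar i) := by
      apply Real.measurable_exp.comp
      exact Finset.measurable_sum _ (fun j _ => (hφ j).mul measurable_const)
    simpa [funext hstar_def] using this
  -- transfer from S to T for functions of Z weighted by hstar
  have transfer : ∀ f : α → ℝ, Measurable f →
      ∫ ω, hstar (Z ω) * x (Z ω) i * f (Z ω) ∂μS
        = ∫ ω, x (Z ω) i * f (Z ω) ∂μT := by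
    intro f hf
    rw [keyS (fun z => hstar z * x z i * f z) (by exact (hhs.mul (hx i)).mul hf),
      keyT (fun z => x z i * f z) (by exact (hx i).mul hf)]
    apply integral_congr_ae
    filter_upwards with z
    rw [hratio z]; ring
  -- split the S integral
  have splitS : ∫ ω, hstar (Z ω) * x (Z ω) i * (mtil (Z ω) - Y ω) ∂μS
      = ∫ ω, hstar (Z ω) * x (Z ω) i * mtil (Z ω) ∂μS
        - ∫ ω, hstar (Z ω) * x (Z ω) i * Y ω ∂μS := by
    rw [← integral_sub (hint3 i) (hint2 i)]
    apply integral_congr_ae; filter_upwards with ω; ring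
  have towS : ∫ ω, hstar (Z ω) * x (Z ω) i * Y ω ∂μS
      = ∫ ω, hstar (Z ω) * x (Z ω) i * mstar (Z ω) ∂μS := by
    have := htowerS (fun z => hstar z * x z i)
      (by simpa [mul_assoc] using hint2 i) (by simpa [mul_assoc] using hint4 i)
    simpa [mul_assoc] using this
  have towT : ∫ ω, x (Z ω) i * Y ω ∂μT = ∫ ω, x (Z ω) i * mstar (Z ω) ∂μT :=
    htowerT (fun z => x z i) (hint5 i) (hint7 i)
  have splitT1 : ∫ ω, x (Z ω) i * (mtil (Z ω) - g (∑ j, x (Z ω) j * β j)) ∂μT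
      = ∫ ω, x (Z ω) i * mtil (Z ω) ∂μT
        - ∫ ω, x (Z ω) i * g (∑ j, x (Z ω) j * β j) ∂μT := by
    rw [← integral_sub (hint6 i) (hint8 i)]
    apply integral_congr_ae; filter_upwards with ω; ring
  have splitT2 : ∫ ω, x (Z ω) i * (Y ω - g (∑ j, x (Z ω) j * β j)) ∂μT
      = ∫ ω, x (Z ω) i * Y ω ∂μT
        - ∫ ω, x (Z ω) i * g (∑ j, x (Z ω) j * β j) ∂μT := by
    rw [← integral_sub (hint5 i) (hint8 i)]
    apply integral_congr_ae; filter_upwards with ω; ring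
  rw [splitS, towS, transfer mtil hmt, transfer mstar hms, splitT1, splitT2, towT]
  ring
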